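/- Let A be an n×n complex matrix with positive real diagonal entries and define ρ = max_i ∑_{j≠i} |A_{ij}|/A_{ii}. If ρ < 1, then |det(A)| ≥ (1−ρ)^n · ∏_{i=1}^n A_{ii}. -/

import Mathlib

open Matrix Polynomial

lemma aux_multiset_pow_le (c : ℝ) (hc : 0 ≤ c) (s : Multiset ℝ)
    (h : ∀ x ∈ s, c ≤ x) : c ^ Multiset.card s ≤ s.prod := by
  induction s using Multiset.induction with
  | empty => simp
  | cons a s ih =>
    simp only [Multiset.card_cons, Multiset.prod_cons, pow_succ]
    have hca := h a (Multiset.mem_cons_self a s)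
    have := ih (fun x hx => h x (Multiset.mem_cons_of_mem hx))
    calc c ^ Multiset.card s * c ≤ s.prod * a := by
          apply mul_le_mul this hca hc
          exact le_trans (pow_nonneg hc _) this
      _ = a * s.prod := mul_comm _ _

lemma root_is_eigenvalue {m : ℕ} (B : Matrix (Fin m) (Fin m) ℂ) (μ : ℂ)
    (hμ : μ ∈ B.charpoly.roots) : Module.End.HasEigenvalue (Matrix.toLin' B) μ := by
  rw [Module.End.hasEigenvalue_iff_mem_spectrum]
  have : Matrix.toLin' B = Matrix.toLinAlgEquiv' B := rfl
  rw [this, AlgEquiv.spectrum_eq Matrix.toLinAlgEquiv' B]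
  rw [spectrum.mem_iff]
  rw [Matrix.isUnit_iff_isUnit_det]
  have hroot : B.charpoly.eval μ = 0 := by
    exact (Polynomial.mem_roots'.mp hμ).2
  rw [isUnit_iff_ne_zero]
  intro hdet
  apply hdet
  rw [Matrix.charpoly, ← Polynomial.coe_evalRingHom, RingHom.map_det] at hroot
  rw [← hroot]
  congr 1
  ext i j
  by_cases hij : i = j <;>
    simp [hij, Matrix.charmatrix_apply_eq, Matrix.charmatrix_apply_ne,
      Matrix.algebraMap_matrix_apply, Algebra.algebraMap_eq_smul_one]


/-- Determinant lower bound in terms of the maximum relative off-diagonal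
row sum ρ: if ρ < 1 then |det A| ≥ (1-ρ)^n · ∏ A_{ii}. -/
theorem det_lower_bound_rho {n : ℕ} (hn : 0 < n) (A : Matrix (Fin n) (Fin n) ℂ)
    (hdiag_im : ∀ i, (A i i).im = 0)
    (hdiag_pos : ∀ i, 0 < (A i i).re)
    (ρ : ℝ)
    (hρ_def : ρ = (Finset.univ.sup' (Finset.univ_nonempty_iff.mpr ⟨⟨0, hn⟩⟩)
      fun i => (∑ j ∈ Finset.univ.erase i, ‖A i j‖) / (A i i).re))
    (hρ : ρ < 1) :
    (1 - ρ) ^ n * ∏ i, (A i i).re ≤ ‖A.det‖ := by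
  classical
  have hne : ∀ i, A i i ≠ 0 := by
    intro i h
    have := hdiag_pos i
    rw [h] at this
    simp at this
  have habs : ∀ i, ‖A i i‖ = (A i i).re := by
    intro i
    rw [Complex.norm_def, Complex.normSq_apply, hdiag_im i, mul_zero, add_zero,
      Real.sqrt_mul_self (hdiag_pos i).le]
  set B : Matrix (Fin n) (Fin n) ℂ := Matrix.of fun i j => A i j / A i i with hB
  have hAB : A = Matrix.diagonal (fun i => A i i) * B := by
    ext i j
    rw [Matrix.diagonal_mul]
    simp only [hB, Matrix.of_apply]
    rw [mul_comm, div_mul_cancel₀ _ (hne i)]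
  -- eigenvalue bound for B
  have hroots : ∀ μ ∈ B.charpoly.roots, 1 - ρ ≤ ‖μ‖ := by
    intro μ hμ
    obtain ⟨k, hk⟩ := eigenvalue_mem_ball (root_is_eigenvalue B μ hμ)
    rw [Metric.mem_closedBall] at hk
    have hBkk : B k k = 1 := div_self (hne k)
    have hsum : (∑ j ∈ Finset.univ.erase k, ‖B k j‖) ≤ ρ := by
      have : (∑ j ∈ Finset.univ.erase k, ‖B k j‖)
          = (∑ j ∈ Finset.univ.erase k, ‖A k j‖) / (A k k).re := by
        rw [Finset.sum_div]
        refine Finset.sum_congr rfl fun j _ => ?_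
        simp only [hB, Matrix.of_apply]
        rw [norm_div, habs k]
      rw [this, hρ_def]
      exact Finset.le_sup'
        (f := fun i => (∑ j ∈ Finset.univ.erase i, ‖A i j‖) / (A i i).re)
        (Finset.mem_univ k)
    have hdist : ‖1 - μ‖ ≤ ρ := by
      rw [hBkk] at hk
      rw [show (1 - μ) = -(μ - 1) by ring, norm_neg]
      calc ‖μ - 1‖ = dist μ 1 := (Complex.dist_eq μ 1).symm
        _ ≤ _ := le_trans hk hsum
    have := norm_sub_norm_le (1 : ℂ) μ
    simp only [norm_one] at this
    linarith
  -- |det B| ≥ (1-ρ)^n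
  have hcard : Multiset.card B.charpoly.roots = n := by
    rw [(Polynomial.splits_iff_card_roots).mp (IsAlgClosed.splits B.charpoly),
      Matrix.charpoly_natDegree_eq_dim, Fintype.card_fin]
  have hdetB : (1 - ρ) ^ n ≤ ‖B.det‖ := by
    rw [Matrix.det_eq_prod_roots_charpoly, show ‖B.charpoly.roots.prod‖ = (B.charpoly.roots.map (fun x => ‖x‖)).prod from map_multiset_prod (normHom (α := ℂ)) _]
    have := aux_multiset_pow_le (1 - ρ) (by linarith) (B.charpoly.roots.map (fun x => ‖x‖))
      (by
        intro x hx
        obtain ⟨μ, hμ, rfl⟩ := Multiset.mem_map.mp hx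
        exact hroots μ hμ)
    rwa [Multiset.card_map, hcard] at this
  have hdetA : ‖A.det‖ = (∏ i, (A i i).re) * ‖B.det‖ := by
    have h1 : A.det = (∏ i, A i i) * B.det := by
      conv_lhs => rw [hAB]
      rw [Matrix.det_mul, Matrix.det_diagonal]
    rw [h1, norm_mul, norm_prod]
    congr 1
    exact Finset.prod_congr rfl fun i _ => habs i
  rw [hdetA]
  have hP : (0 : ℝ) ≤ ∏ i, (A i i).re := Finset.prod_nonneg fun i _ => (hdiag_pos i).le
  calc (1 - ρ) ^ n * ∏ i, (A i i).re = (∏ i, (A i i).re) * (1 - ρ) ^ n := mul_comm _ _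
    _ ≤ (∏ i, (A i i).re) * ‖B.det‖ := mul_le_mul_of_nonneg_left hdetB hP
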